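/- For all positive reals ε, η and every k ∈ ℝ³ \ {0}, the six vectors b₀¹, b₀², b₊¹, b₊², b₋¹, b₋² form a basis of ℝ⁶ which is orthonormal with respect to the inner product (u, w) ↦ uᵀ A⁰ w; that is, b_αᵀ A⁰ b_β = δ_{αβ} for α, β running over the six labels. -/
import Mathlib


open Matrix

noncomputable section

/-- `A⁰ = diag(ε I₃, η I₃)`. -/
def A0 (ε η : ℝ) : Matrix (Fin 3 ⊕ Fin 3) (Fin 3 ⊕ Fin 3) ℝ :=
  Matrix.fromBlocks (ε • 1) 0 0 (η • 1)

/-- The Euclidean norm `|k|`. -/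
def nk (k : Fin 3 → ℝ) : ℝ := Real.sqrt (∑ j, (k j) ^ 2)

/-- The six polar vectors `b₀¹, b₀², b₊¹, b₊², b₋¹, b₋²` built from the propagation
triple `(κ, z¹, z²)`. -/
def polarBasis (ε η : ℝ) (κ z1 z2 : Fin 3 → ℝ) : Fin 6 → (Fin 3 ⊕ Fin 3 → ℝ) :=
  ![Sum.elim ((Real.sqrt ε)⁻¹ • κ) 0,
    Sum.elim 0 ((Real.sqrt η)⁻¹ • κ),
    Sum.elim ((Real.sqrt (2 * ε))⁻¹ • z1) ((Real.sqrt (2 * η))⁻¹ • z2),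
    Sum.elim ((Real.sqrt (2 * ε))⁻¹ • z2) (-(Real.sqrt (2 * η))⁻¹ • z1),
    Sum.elim ((Real.sqrt (2 * ε))⁻¹ • z1) (-(Real.sqrt (2 * η))⁻¹ • z2),
    Sum.elim ((Real.sqrt (2 * ε))⁻¹ • z2) ((Real.sqrt (2 * η))⁻¹ • z1)]

/-- Block formula for the `A⁰` inner product. -/
lemma dot_A0 (ε η : ℝ) (a b c d : Fin 3 → ℝ) :
    Sum.elim a b ⬝ᵥ (A0 ε η *ᵥ Sum.elim c d) = ε * (a ⬝ᵥ c) + η * (b ⬝ᵥ d) := by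
  simp [A0, Matrix.fromBlocks_mulVec, Matrix.smul_mulVec, dotProduct,
    Fintype.sum_sum_type, Finset.mul_sum, mul_comm, mul_left_comm]

set_option maxHeartbeats 1000000 in
/-- The Gram matrix of the polar vectors with respect to `A⁰` is the identity. -/
lemma polarBasis_gram (ε η : ℝ) (hε : 0 < ε) (hη : 0 < η)
    (k : Fin 3 → ℝ) (hk : k ≠ 0) (z1 z2 : Fin 3 → ℝ)
    (hz1 : z1 ⬝ᵥ z1 = 1) (hz2 : z2 ⬝ᵥ z2 = 1)
    (hkz1 : ((nk k)⁻¹ • k) ⬝ᵥ z1 = 0) (hkz2 : ((nk k)⁻¹ • k) ⬝ᵥ z2 = 0)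
    (hz12 : z1 ⬝ᵥ z2 = 0) :
    ∀ α β : Fin 6,
      polarBasis ε η ((nk k)⁻¹ • k) z1 z2 α
          ⬝ᵥ (A0 ε η *ᵥ polarBasis ε η ((nk k)⁻¹ • k) z1 z2 β)
        = if α = β then 1 else 0 := by
  set κ := (nk k)⁻¹ • k with hκ
  have hκκ : κ ⬝ᵥ κ = 1 := by
    have hnk : 0 < nk k := by
      apply Real.sqrt_pos.2
      rcases Function.ne_iff.1 hk with ⟨j, hj⟩
      exact Finset.sum_pos' (fun i _ => sq_nonneg _)
        ⟨j, Finset.mem_univ j, by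
          simpa using sq_nonneg (k j) |>.lt_of_ne
            (by simpa [pow_eq_zero_iff] using (Ne.symm (pow_ne_zero 2 hj)))⟩
    have hkk : k ⬝ᵥ k = nk k * nk k := by
      unfold nk
      rw [Real.mul_self_sqrt (by positivity)]
      simp [dotProduct, sq]
    simp [hκ, smul_dotProduct, dotProduct_smul, hkk]
    field_simp
  have hz1κ : z1 ⬝ᵥ κ = 0 := by rw [dotProduct_comm]; exact hkz1
  have hz2κ : z2 ⬝ᵥ κ = 0 := by rw [dotProduct_comm]; exact hkz2
  have hz21 : z2 ⬝ᵥ z1 = 0 := by rw [dotProduct_comm]; exact hz12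
  have hsε : (Real.sqrt ε)⁻¹ * (Real.sqrt ε)⁻¹ = ε⁻¹ := by
    rw [← mul_inv, Real.mul_self_sqrt hε.le]
  have hsη : (Real.sqrt η)⁻¹ * (Real.sqrt η)⁻¹ = η⁻¹ := by
    rw [← mul_inv, Real.mul_self_sqrt hη.le]
  have hs2ε : (Real.sqrt (2*ε))⁻¹ * (Real.sqrt (2*ε))⁻¹ = (2*ε)⁻¹ := by
    rw [← mul_inv, Real.mul_self_sqrt (by positivity)]
  have hs2η : (Real.sqrt (2*η))⁻¹ * (Real.sqrt (2*η))⁻¹ = (2*η)⁻¹ := by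
    rw [← mul_inv, Real.mul_self_sqrt (by positivity)]
  have h24 : Real.sqrt 2 ^ 4 = 4 := by
    rw [show (4:ℕ) = 2*2 from rfl, pow_mul, Real.sq_sqrt (by norm_num : (0:ℝ) ≤ 2)]
    norm_num
  intro α β
  fin_cases α <;> fin_cases β
  all_goals norm_num [polarBasis, dot_A0, smul_dotProduct, dotProduct_smul, neg_smul,
    neg_dotProduct, dotProduct_neg, zero_dotProduct, dotProduct_zero, hκκ, hz1, hz2,
    hz12, hz21, hkz1, hkz2, hz1κ, hz2κ, mul_assoc, hsε, hsη, hs2ε, hs2η, Fin.ext_iff]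
  all_goals field_simp
  all_goals ring_nf
  all_goals simp [Real.sq_sqrt, hε.le, hη.le, h24]
  all_goals ring_nf

/-- The six vectors `b₀¹, b₀², b₊¹, b₊², b₋¹, b₋²` form a basis of `ℝ⁶` which is
orthonormal with respect to the inner product `(u,w) ↦ uᵀ A⁰ w`. -/
theorem polarBasis_orthonormal (ε η : ℝ) (hε : 0 < ε) (hη : 0 < η)
    (k : Fin 3 → ℝ) (hk : k ≠ 0) (z1 z2 : Fin 3 → ℝ)
    (hz1 : z1 ⬝ᵥ z1 = 1) (hz2 : z2 ⬝ᵥ z2 = 1)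
    (hkz1 : ((nk k)⁻¹ • k) ⬝ᵥ z1 = 0) (hkz2 : ((nk k)⁻¹ • k) ⬝ᵥ z2 = 0)
    (hz12 : z1 ⬝ᵥ z2 = 0)
    (hc1 : crossProduct ((nk k)⁻¹ • k) z1 = z2)
    (hc2 : crossProduct z1 z2 = (nk k)⁻¹ • k)
    (hc3 : crossProduct z2 ((nk k)⁻¹ • k) = z1) :
    LinearIndependent ℝ (polarBasis ε η ((nk k)⁻¹ • k) z1 z2) ∧
    Submodule.span ℝ (Set.range (polarBasis ε η ((nk k)⁻¹ • k) z1 z2)) = ⊤ ∧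
    ∀ α β : Fin 6,
      polarBasis ε η ((nk k)⁻¹ • k) z1 z2 α
          ⬝ᵥ (A0 ε η *ᵥ polarBasis ε η ((nk k)⁻¹ • k) z1 z2 β)
        = if α = β then 1 else 0 := by
  have gram := polarBasis_gram ε η hε hη k hk z1 z2 hz1 hz2 hkz1 hkz2 hz12
  set B := polarBasis ε η ((nk k)⁻¹ • k) z1 z2 with hB
  have hli : LinearIndependent ℝ B := by
    rw [Fintype.linearIndependent_iff]
    intro g hg j
    have hsum : ∀ w : Fin 3 ⊕ Fin 3 → ℝ,
        (∑ i, g i • B i) ⬝ᵥ w = ∑ i, g i * (B i ⬝ᵥ w) := by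
      intro w
      simp only [dotProduct, Finset.sum_apply, Pi.smul_apply, smul_eq_mul,
        Finset.sum_mul, Finset.mul_sum]
      rw [Finset.sum_comm]
      exact Finset.sum_congr rfl fun i _ => Finset.sum_congr rfl fun x _ => by ring
    have := congrArg (fun v => v ⬝ᵥ (A0 ε η *ᵥ B j)) hg
    simpa [hsum, gram, Finset.sum_ite_eq', Finset.mem_univ] using this
  refine ⟨hli, ?_, gram⟩
  apply hli.span_eq_top_of_card_eq_finrank
  simp [Module.finrank_pi]
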